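/- Partial correctness of list reversal (loop invariant preservation, reachability part): Let n and n' be partial-functional binary relations on V and x, y, x', y' ∈ V-valued (optional) program variables with: n' defined by n'(v₁,v₂) ↔ (n(v₁,v₂) ∧ v₁ ≠ x) ∨ (v₁ = x ∧ v₂ = y), y' = x, and n(x, x'). Assume n is acyclic, unshared (n(v₁,v) ∧ n(v₂,v) → v₁ = v₂), every node is n*-reachable from x or from y, and no node is n*-reachable from both x and y. Then every node is n'*-reachable from x' or from y', and no node is n'*-reachable from both x' and y'. -/
import Mathlib


theorem stmt_19 {V : Type*} (n n' : V → V → Prop) (x y x' y' : V)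
    (hnfunc : ∀ v₁ v₂ v₃ : V, n v₁ v₂ → n v₁ v₃ → v₂ = v₃)
    (hn'func : ∀ v₁ v₂ v₃ : V, n' v₁ v₂ → n' v₁ v₃ → v₂ = v₃)
    (hn' : ∀ v₁ v₂ : V, n' v₁ v₂ ↔ ((n v₁ v₂ ∧ v₁ ≠ x) ∨ (v₁ = x ∧ v₂ = y)))
    (hy' : y' = x)
    (hx' : n x x')
    (hacyc : ∀ a : V, ¬ Relation.TransGen n a a)
    (hunshared : ∀ v₁ v₂ v : V, n v₁ v → n v₂ v → v₁ = v₂)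
    (htotal : ∀ v : V, Relation.ReflTransGen n x v ∨ Relation.ReflTransGen n y v)
    (hdisj : ∀ v : V, ¬ (Relation.ReflTransGen n x v ∧ Relation.ReflTransGen n y v)) :
    (∀ v : V, Relation.ReflTransGen n' x' v ∨ Relation.ReflTransGen n' y' v) ∧
    (∀ v : V, ¬ (Relation.ReflTransGen n' x' v ∧ Relation.ReflTransGen n' y' v)) := by
  rw [hy']
  have hA : ¬ Relation.ReflTransGen n x' x := fun h => hacyc x (Relation.TransGen.head' hx' h)
  have hBx : ¬ Relation.ReflTransGen n y x := fun h => hdisj x ⟨Relation.ReflTransGen.refl, h⟩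
  have conv : ∀ a v, Relation.ReflTransGen n a v → ¬ Relation.ReflTransGen n a x →
      Relation.ReflTransGen n' a v := by
    intro a v h
    induction h using Relation.ReflTransGen.head_induction_on with
    | refl => intro _; exact Relation.ReflTransGen.refl
    | head hab hbv ih =>
      rename_i a b
      intro ha
      have hax : a ≠ x := fun he => ha (he ▸ Relation.ReflTransGen.refl)
      exact Relation.ReflTransGen.head ((hn' a b).2 (Or.inl ⟨hab, hax⟩))
        (ih (fun h => ha (Relation.ReflTransGen.head hab h)))
  have conv2 : ∀ z, ¬ Relation.ReflTransGen n z x → ∀ a v, Relation.ReflTransGen n' a v →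
      Relation.ReflTransGen n z a → Relation.ReflTransGen n z v := by
    intro z hz a v h
    induction h using Relation.ReflTransGen.head_induction_on with
    | refl => exact id
    | head hab hbv ih =>
      rename_i a b
      intro ha
      have hax : a ≠ x := fun he => hz (he ▸ ha)
      have hab' : n a b := by
        rcases (hn' a b).1 hab with ⟨h1, _⟩ | ⟨h1, _⟩
        · exact h1
        · exact absurd h1 hax
      exact ih (ha.tail hab')
  constructor
  · intro v
    rcases htotal v with h | h
    · rcases Relation.ReflTransGen.cases_head h with rfl | ⟨c, hc, hcv⟩
      · right; exact Relation.ReflTransGen.refl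
      · left; exact conv x' v (hnfunc x c x' hc hx' ▸ hcv) hA
    · right
      exact Relation.ReflTransGen.head ((hn' x y).2 (Or.inr ⟨rfl, rfl⟩)) (conv y v h hBx)
  · rintro v ⟨h1, h2⟩
    have hxv : Relation.ReflTransGen n x' v := conv2 x' hA x' v h1 Relation.ReflTransGen.refl
    rcases Relation.ReflTransGen.cases_head h2 with rfl | ⟨c, hc, hcv⟩
    · exact hA hxv
    · have hcy : c = y := by
        rcases (hn' x c).1 hc with ⟨_, hne⟩ | ⟨_, h⟩
        · exact absurd rfl hne
        · exact h
      have hyv : Relation.ReflTransGen n y v := conv2 y hBx y v (hcy ▸ hcv) Relation.ReflTransGen.refl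
      exact hdisj v ⟨Relation.ReflTransGen.head hx' hxv, hyv⟩
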